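/- The standard multi-step (λ-return) Bellman operator equals the value function plus the Generalized Advantage Estimator: for a trajectory with rewards r_t and γ, λ ∈ [0,1) with γλ < 1, (1−λ) Σ_{n=1}^∞ λ^{n−1} (T^π)^n V(s_t) = V(s_t) + Σ_{l=0}^∞ (γλ)^l δ_{t+l}, where (T^π)^n V(s_t) = Σ_{l=0}^{n−1} γ^l r_{t+l} + γ^n V(s_{t+n}) and δ_t = r_t + γ V(s_{t+1}) − V(s_t). -/

import Mathlib

set_option maxHeartbeats 1000000


open Finset

/-- Along a fixed trajectory with bounded rewards `r` and a bounded
value function `v`, the λ-return Bellman operator equals the value function plus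
the Generalized Advantage Estimator:
`(1−λ) Σ_{n≥1} λ^{n−1} (T^π)^n V(s_t) = V(s_t) + Σ_{l≥0} (γλ)^l δ_{t+l}`,
where `(T^π)^n V(s_t) = Σ_{l<n} γ^l r_{t+l} + γ^n V(s_{t+n})` and
`δ_t = r_t + γ V(s_{t+1}) − V(s_t)`. -/
theorem lambda_return_eq_gae
    (r v : ℕ → ℝ) (γ lam : ℝ)
    (hγ0 : 0 ≤ γ) (hγ1 : γ < 1) (hlam0 : 0 ≤ lam) (hlam1 : lam < 1)
    (hγlam : γ * lam < 1)
    (hrb : ∃ M : ℝ, ∀ t, |r t| ≤ M) (hvb : ∃ M : ℝ, ∀ t, |v t| ≤ M)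
    (Tn : ℕ → ℕ → ℝ)
    (hTn : ∀ n t, Tn n t = (∑ l ∈ range n, γ ^ l * r (t + l)) + γ ^ n * v (t + n))
    (δ : ℕ → ℝ) (hδ : ∀ t, δ t = r t + γ * v (t + 1) - v t)
    (hsum1 : ∀ t, Summable (fun n : ℕ => lam ^ n * Tn (n + 1) t))
    (hsum2 : ∀ t, Summable (fun l : ℕ => (γ * lam) ^ l * δ (t + l))) :
    ∀ t, (1 - lam) * ∑' n : ℕ, lam ^ n * Tn (n + 1) t
      = v t + ∑' l : ℕ, (γ * lam) ^ l * δ (t + l) := by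
  intro t
  obtain ⟨Mr, hMr⟩ := hrb
  obtain ⟨Mv, hMv⟩ := hvb
  have hMv0 : 0 ≤ Mv := le_trans (abs_nonneg _) (hMv 0)
  have hγlam0 : 0 ≤ γ * lam := mul_nonneg hγ0 hlam0
  -- bound on δ
  have hδb : ∀ s, |δ s| ≤ Mr + Mv + Mv := by
    intro s
    rw [hδ]
    have h1 := abs_le.mp (hMr s)
    have h2 := abs_le.mp (hMv s)
    have h3 := abs_le.mp (hMv (s + 1))
    rw [abs_le]
    constructor <;>
      nlinarith [mul_le_mul_of_nonneg_left h3.2 hγ0, mul_le_mul_of_nonneg_left h3.1 hγ0]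
  -- norm-summability facts
  have hf_norm : Summable fun k : ℕ => ‖lam ^ k‖ := by
    simpa [norm_pow, Real.norm_eq_abs, abs_of_nonneg hlam0] using
      summable_geometric_of_lt_one hlam0 hlam1
  have hg_norm : Summable fun l : ℕ => ‖(γ * lam) ^ l * δ (t + l)‖ := by
    refine Summable.of_nonneg_of_le (fun _ => norm_nonneg _) (fun l => ?_)
      ((summable_geometric_of_lt_one hγlam0 hγlam).mul_left (Mr + Mv + Mv))
    rw [Real.norm_eq_abs, abs_mul, abs_pow, abs_of_nonneg hγlam0, mul_comm]
    exact mul_le_mul_of_nonneg_right (hδb _) (pow_nonneg hγlam0 l)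
  -- telescoping identity
  have tele : ∀ m : ℕ, ∑ l ∈ range m, γ ^ l * δ (t + l)
      = (∑ l ∈ range m, γ ^ l * r (t + l)) + γ ^ m * v (t + m) - v t := by
    intro m
    have h1 : ∀ l, γ ^ l * δ (t + l)
        = γ ^ l * r (t + l) + ((fun j => γ ^ j * v (t + j)) (l + 1)
            - (fun j => γ ^ j * v (t + j)) l) := by
      intro l
      simp only [hδ]
      have : t + l + 1 = t + (l + 1) := by omega
      rw [this]
      ring
    rw [Finset.sum_congr rfl (fun l _ => h1 l), Finset.sum_add_distrib,
      Finset.sum_range_sub (fun j => γ ^ j * v (t + j)) m]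
    simp
    ring
  -- key identity: lam^n * Tn(n+1) t = lam^n * v t + antidiagonal sum
  have key : ∀ n : ℕ, lam ^ n * Tn (n + 1) t
      = lam ^ n * v t
        + ∑ kl ∈ Finset.HasAntidiagonal.antidiagonal n, lam ^ kl.1 * ((γ * lam) ^ kl.2 * δ (t + kl.2)) := by
    intro n
    have h2 : ∑ kl ∈ Finset.HasAntidiagonal.antidiagonal n, lam ^ kl.1 * ((γ * lam) ^ kl.2 * δ (t + kl.2))
        = lam ^ n * ∑ l ∈ range (n + 1), γ ^ l * δ (t + l) := by
      have h3 : ∀ kl ∈ Finset.HasAntidiagonal.antidiagonal n,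
          lam ^ kl.1 * ((γ * lam) ^ kl.2 * δ (t + kl.2))
            = lam ^ n * (γ ^ kl.2 * δ (t + kl.2)) := by
        intro kl hkl
        rw [Finset.HasAntidiagonal.mem_antidiagonal] at hkl
        rw [mul_pow, ← hkl]
        ring
      rw [Finset.sum_congr rfl h3, ← Finset.mul_sum]
      congr 1
      rw [Finset.Nat.sum_antidiagonal_eq_sum_range_succ (fun k l => γ ^ l * δ (t + l)),
        ← Finset.sum_range_reflect (fun l => γ ^ l * δ (t + l)) (n + 1)]
      apply Finset.sum_congr rfl
      intro k hk
      rw [Finset.mem_range] at hk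
      congr 2 <;> omega
    rw [h2, hTn, tele (n + 1)]
    ring
  -- summability of pieces
  have hs_const : Summable fun n : ℕ => lam ^ n * v t :=
    (summable_geometric_of_lt_one hlam0 hlam1).mul_right _
  have hs_anti : Summable fun n : ℕ =>
      ∑ kl ∈ Finset.HasAntidiagonal.antidiagonal n, lam ^ kl.1 * ((γ * lam) ^ kl.2 * δ (t + kl.2)) :=
    (summable_norm_sum_mul_antidiagonal_of_summable_norm hf_norm hg_norm).of_norm
  have hone : (1 : ℝ) - lam ≠ 0 := by
    have : lam < 1 := hlam1
    linarith
  calc (1 - lam) * ∑' n : ℕ, lam ^ n * Tn (n + 1) t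
      = (1 - lam) * ∑' n : ℕ, (lam ^ n * v t
          + ∑ kl ∈ Finset.HasAntidiagonal.antidiagonal n, lam ^ kl.1 * ((γ * lam) ^ kl.2 * δ (t + kl.2))) := by
        rw [tsum_congr key]
    _ = (1 - lam) * ((∑' n : ℕ, lam ^ n * v t)
          + ∑' n : ℕ, ∑ kl ∈ Finset.HasAntidiagonal.antidiagonal n,
              lam ^ kl.1 * ((γ * lam) ^ kl.2 * δ (t + kl.2))) := by
        rw [Summable.tsum_add hs_const hs_anti]
    _ = (1 - lam) * ((1 - lam)⁻¹ * v t
          + (1 - lam)⁻¹ * ∑' l : ℕ, (γ * lam) ^ l * δ (t + l)) := by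
        congr 1
        rw [tsum_mul_right, tsum_geometric_of_lt_one hlam0 hlam1,
          ← tsum_mul_tsum_eq_tsum_sum_antidiagonal_of_summable_norm hf_norm hg_norm,
          tsum_geometric_of_lt_one hlam0 hlam1]
    _ = v t + ∑' l : ℕ, (γ * lam) ^ l * δ (t + l) := by
        field_simp
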